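/- arXiv:2507.12627 — 2 statements merged into one kernel-verified Lean document; each statement's English description precedes it below -/
import Mathlib

section
/- For σ ∈ ℝ, the L²(ℝ³)-norm of the weighted coherent state is comparable to ⟨p⟩^σ uniformly in ℏ ∈ (0,1] and q: ‖⟨ℏ∇⟩^σ φ^ℏ_{(q,p)}‖_{L²_x}² = (πℏ)^{-3/2} ‖⟨ξ⟩^σ e^{-|p-ξ|²/(2ℏ)}‖_{L²_ξ}² ∼ ⟨p⟩^{2σ}, with implicit constants depending only on σ. -/
open MeasureTheory
noncomputable section

abbrev E3 := EuclideanSpace ℝ (Fin 3)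

/-- The coherent state `φ^ℏ_{(q,p)}(x) = (πℏ)^{-3/4} e^{-|x-q|²/(2ℏ)} e^{i(x-q)·p/ℏ}`. -/
def coherent (ℏ : ℝ) (q p x : E3) : ℂ :=
  (((Real.pi * ℏ) ^ (-(3 : ℝ) / 4) : ℝ) : ℂ) *
    Complex.exp (-((‖x - q‖ ^ 2 / (2 * ℏ) : ℝ) : ℂ)) *
    Complex.exp (Complex.I * ((inner ℝ (x - q) p : ℝ) : ℂ) / (ℏ : ℂ))

lemma finrank_E3 : Module.finrank ℝ E3 = 3 := finrank_euclideanSpace_fin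

lemma integrable_gauss {c : ℝ} (hc : 0 < c) :
    Integrable (fun v : E3 => Real.exp (-(c * ‖v‖ ^ 2))) := by
  have h := (GaussianFourier.integrable_cexp_neg_mul_sq_norm_add (V := E3) (b := (c : ℂ))
    (by simpa using hc) 0 (0 : E3)).norm
  simpa [Complex.norm_exp, ← Complex.ofReal_pow] using h

lemma one_add_rpow_mul_exp_le {τ c : ℝ} (hτ : 0 ≤ τ) (hc : 0 < c) {s : ℝ} (hs : 0 ≤ s) :
    (1 + s) ^ τ * Real.exp (-(c * s)) ≤ Real.exp (2 * τ ^ 2 / c) * Real.exp (-(c / 2 * s)) := by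
  have hsq : Real.sqrt s ^ 2 = s := Real.sq_sqrt hs
  have h2 : Real.sqrt (1 + s) ≤ 1 + Real.sqrt s := by
    have : (1 : ℝ) + s ≤ (1 + Real.sqrt s) ^ 2 := by nlinarith [Real.sqrt_nonneg s]
    calc Real.sqrt (1 + s) ≤ Real.sqrt ((1 + Real.sqrt s) ^ 2) := Real.sqrt_le_sqrt this
      _ = 1 + Real.sqrt s := by
          rw [Real.sqrt_sq (by positivity)]
  have h3 := Real.log_le_sub_one_of_pos (x := Real.sqrt (1 + s)) (by positivity)
  have h4 : Real.log (1 + s) = 2 * Real.log (Real.sqrt (1 + s)) := by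
    rw [Real.log_sqrt (by linarith)]; ring
  have h1 : Real.log (1 + s) ≤ 2 * Real.sqrt s := by linarith
  have h7 : τ * (2 * Real.sqrt s) ≤ c / 2 * s + 2 * τ ^ 2 / c := by
    have h8 : (τ * (2 * Real.sqrt s)) * (2 * c) ≤ (c / 2 * s + 2 * τ ^ 2 / c) * (2 * c) := by
      have he : (c / 2 * s + 2 * τ ^ 2 / c) * (2 * c) = c ^ 2 * s + 4 * τ ^ 2 := by
        field_simp; ring
      rw [he]
      nlinarith [sq_nonneg (c * Real.sqrt s - 2 * τ)]
    exact le_of_mul_le_mul_right h8 (by positivity)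
  have h5 : τ * Real.log (1 + s) ≤ c / 2 * s + 2 * τ ^ 2 / c :=
    le_trans (mul_le_mul_of_nonneg_left h1 hτ) h7
  rw [Real.rpow_def_of_pos (by linarith), ← Real.exp_add, ← Real.exp_add]
  exact Real.exp_le_exp.2 (by rw [mul_comm (Real.log (1 + s)) τ]; linarith)

lemma integrable_pg {τ c : ℝ} (hτ : 0 ≤ τ) (hc : 0 < c) :
    Integrable (fun v : E3 => (1 + ‖v‖ ^ 2) ^ τ * Real.exp (-(c * ‖v‖ ^ 2))) := by
  apply Integrable.mono' ((integrable_gauss (half_pos hc)).const_mul (Real.exp (2 * τ ^ 2 / c)))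
  · apply Continuous.aestronglyMeasurable
    exact ((continuous_const.add ((continuous_norm).pow 2)).rpow_const
      (fun v => Or.inl (add_pos_of_pos_of_nonneg one_pos (sq_nonneg _)).ne')).mul
      (Real.continuous_exp.comp (by fun_prop))
  · filter_upwards with v
    rw [Real.norm_of_nonneg (by positivity)]
    exact one_add_rpow_mul_exp_le hτ hc (by positivity)

lemma peetre_aux {σ a b d : ℝ} (ha : 1 ≤ a) (hb : 1 ≤ b) (hd : 1 ≤ d)
    (h1 : a ≤ 2 * b * d) (h2 : b ≤ 2 * a * d) :
    a ^ σ ≤ b ^ σ * (2 * d) ^ |σ| := by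
  rcases le_or_gt 0 σ with hσ | hσ
  · rw [abs_of_nonneg hσ, ← Real.mul_rpow (by linarith) (by positivity)]
    exact Real.rpow_le_rpow (by linarith) (by nlinarith) hσ
  · rw [abs_of_neg hσ]
    have h3 : (a * (2 * d)) ^ σ ≤ b ^ σ :=
      Real.rpow_le_rpow_of_nonpos (by linarith) (by nlinarith) hσ.le
    rw [Real.mul_rpow (by linarith) (by positivity)] at h3
    have hpos : (0 : ℝ) < (2 * d) ^ σ := Real.rpow_pos_of_pos (by linarith) σ
    rw [Real.rpow_neg (by positivity), ← div_eq_mul_inv, le_div_iff₀ hpos]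
    exact h3

lemma peetre_up (σ : ℝ) (p ξ : E3) :
    (1 + ‖ξ‖ ^ 2) ^ σ ≤ (1 + ‖p‖ ^ 2) ^ σ * (2 * (1 + ‖p - ξ‖ ^ 2)) ^ |σ| := by
  have hξ : ‖ξ‖ ≤ ‖p‖ + ‖p - ξ‖ := by
    calc ‖ξ‖ = ‖p - (p - ξ)‖ := by rw [sub_sub_cancel]
      _ ≤ ‖p‖ + ‖p - ξ‖ := norm_sub_le _ _
  have hp : ‖p‖ ≤ ‖ξ‖ + ‖p - ξ‖ := by
    calc ‖p‖ = ‖ξ + (p - ξ)‖ := by rw [add_sub_cancel]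
      _ ≤ ‖ξ‖ + ‖p - ξ‖ := norm_add_le _ _
  refine peetre_aux (le_add_of_nonneg_right (by positivity))
    (le_add_of_nonneg_right (by positivity))
    (le_add_of_nonneg_right (by positivity)) ?_ ?_ <;>
    nlinarith [norm_nonneg ξ, norm_nonneg p, norm_nonneg (p - ξ),
      sq_nonneg (‖p‖ - ‖p - ξ‖), sq_nonneg (‖ξ‖ - ‖p - ξ‖),
      sq_nonneg (‖p‖ * ‖p - ξ‖), sq_nonneg (‖ξ‖ * ‖p - ξ‖)]

lemma peetre_down (σ : ℝ) (p ξ : E3) :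
    (1 + ‖p‖ ^ 2) ^ σ * (2 * (1 + ‖p - ξ‖ ^ 2)) ^ (-|σ|) ≤ (1 + ‖ξ‖ ^ 2) ^ σ := by
  have h := peetre_up σ ξ p
  rw [norm_sub_rev] at h
  have hpos : (0 : ℝ) < (2 * (1 + ‖p - ξ‖ ^ 2)) ^ |σ| :=
    Real.rpow_pos_of_pos (by positivity) _
  rw [Real.rpow_neg (by positivity), ← div_eq_mul_inv, div_le_iff₀ hpos]
  exact h

lemma scaled_int (f : E3 → ℝ) {R : ℝ} (hR : 0 ≤ R) :
    ∫ v : E3, f (R • v) = (R ^ 3)⁻¹ * ∫ v, f v := by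
  rw [Measure.integral_comp_smul_of_nonneg volume f R (hR := hR), finrank_E3, smul_eq_mul]

lemma sqrt_cube {t : ℝ} (ht : 0 ≤ t) : Real.sqrt t ^ 3 = t ^ ((3 : ℝ) / 2) := by
  rw [Real.sqrt_eq_rpow, ← Real.rpow_natCast (t ^ ((1:ℝ)/2)) 3, ← Real.rpow_mul ht]
  norm_num

lemma integrable_pg1 {τ : ℝ} (hτ : 0 ≤ τ) :
    Integrable (fun v : E3 => (1 + ‖v‖ ^ 2) ^ τ * Real.exp (-‖v‖ ^ 2)) := by
  simpa using integrable_pg hτ one_pos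

lemma integrable_gauss1 : Integrable (fun v : E3 => Real.exp (-‖v‖ ^ 2)) := by
  simpa using integrable_gauss (c := 1) one_pos

lemma integrable_pgm {τ : ℝ} (hτ : 0 ≤ τ) :
    Integrable (fun v : E3 => (1 + ‖v‖ ^ 2) ^ (-τ) * Real.exp (-‖v‖ ^ 2)) := by
  apply Integrable.mono' integrable_gauss1
  · apply Continuous.aestronglyMeasurable
    exact ((continuous_const.add ((continuous_norm).pow 2)).rpow_const
      (fun v => Or.inl (add_pos_of_pos_of_nonneg one_pos (sq_nonneg _)).ne')).mul (Real.continuous_exp.comp (by fun_prop))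
  · filter_upwards with v
    rw [Real.norm_of_nonneg (by positivity)]
    have : (1 + ‖v‖ ^ 2) ^ (-τ) ≤ 1 :=
      Real.rpow_le_one_of_one_le_of_nonpos (le_add_of_nonneg_right (by positivity))
        (neg_nonpos.2 hτ)
    calc (1 + ‖v‖ ^ 2) ^ (-τ) * Real.exp (-‖v‖ ^ 2)
        ≤ 1 * Real.exp (-‖v‖ ^ 2) := mul_le_mul_of_nonneg_right this (Real.exp_nonneg _)
      _ = Real.exp (-‖v‖ ^ 2) := one_mul _

lemma norm_sqrt_smul {t : ℝ} (ht : 0 ≤ t) (v : E3) : ‖Real.sqrt t • v‖ ^ 2 = t * ‖v‖ ^ 2 := by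
  rw [norm_smul, Real.norm_eq_abs, abs_of_nonneg (Real.sqrt_nonneg t), mul_pow, Real.sq_sqrt ht]

lemma unscale {t : ℝ} (h0 : 0 < t) (f : E3 → ℝ) :
    ∫ u : E3, f u = t ^ ((3 : ℝ) / 2) * ∫ v : E3, f (Real.sqrt t • v) := by
  rw [scaled_int f (Real.sqrt_pos.2 h0).le, ← mul_assoc, sqrt_cube h0.le,
    mul_inv_cancel₀ (by positivity), one_mul]

lemma K_up {τ t : ℝ} (hτ : 0 ≤ τ) (h0 : 0 < t) (h1 : t ≤ 1) :
    ∫ u : E3, (1 + ‖u‖ ^ 2) ^ τ * Real.exp (-(t⁻¹ * ‖u‖ ^ 2))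
      ≤ t ^ ((3 : ℝ) / 2) * ∫ v : E3, (1 + ‖v‖ ^ 2) ^ τ * Real.exp (-‖v‖ ^ 2) := by
  rw [unscale h0]
  have hrp : (0:ℝ) < t ^ ((3:ℝ)/2) := Real.rpow_pos_of_pos h0 _
  apply mul_le_mul_of_nonneg_left _ hrp.le
  refine integral_mono_of_nonneg (Filter.Eventually.of_forall fun v => by positivity)
    (integrable_pg1 hτ) (Filter.Eventually.of_forall fun v => ?_)
  show (1 + ‖Real.sqrt t • v‖ ^ 2) ^ τ * Real.exp (-(t⁻¹ * ‖Real.sqrt t • v‖ ^ 2)) ≤ _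
  rw [norm_sqrt_smul h0.le, ← mul_assoc, inv_mul_cancel₀ h0.ne', one_mul]
  have hb : (1 + t * ‖v‖ ^ 2) ^ τ ≤ (1 + ‖v‖ ^ 2) ^ τ :=
    Real.rpow_le_rpow (by positivity) (by nlinarith [sq_nonneg ‖v‖]) hτ
  exact mul_le_mul_of_nonneg_right hb (Real.exp_nonneg _)

lemma K_down {τ t : ℝ} (hτ : 0 ≤ τ) (h0 : 0 < t) (h1 : t ≤ 1) :
    t ^ ((3 : ℝ) / 2) * ∫ v : E3, (1 + ‖v‖ ^ 2) ^ (-τ) * Real.exp (-‖v‖ ^ 2)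
      ≤ ∫ u : E3, (1 + ‖u‖ ^ 2) ^ (-τ) * Real.exp (-(t⁻¹ * ‖u‖ ^ 2)) := by
  rw [unscale h0 (fun u : E3 => (1 + ‖u‖ ^ 2) ^ (-τ) * Real.exp (-(t⁻¹ * ‖u‖ ^ 2)))]
  have hrp : (0:ℝ) < t ^ ((3:ℝ)/2) := Real.rpow_pos_of_pos h0 _
  apply mul_le_mul_of_nonneg_left _ hrp.le
  have hint : Integrable (fun v : E3 =>
      (1 + ‖Real.sqrt t • v‖ ^ 2) ^ (-τ) * Real.exp (-(t⁻¹ * ‖Real.sqrt t • v‖ ^ 2))) := by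
    apply Integrable.mono' integrable_gauss1
    · apply Continuous.aestronglyMeasurable
      apply Continuous.mul
      · exact (continuous_const.add ((continuous_const_smul _).norm.pow 2)).rpow_const
          (fun v => Or.inl (add_pos_of_pos_of_nonneg one_pos (sq_nonneg _)).ne')
      · exact Real.continuous_exp.comp (by fun_prop)
    · filter_upwards with v
      rw [Real.norm_of_nonneg (by positivity), norm_sqrt_smul h0.le,
        ← mul_assoc, inv_mul_cancel₀ h0.ne', one_mul]
      have : (1 + t * ‖v‖ ^ 2) ^ (-τ) ≤ 1 :=
        Real.rpow_le_one_of_one_le_of_nonpos (by nlinarith [sq_nonneg ‖v‖])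
          (neg_nonpos.2 hτ)
      calc (1 + t * ‖v‖ ^ 2) ^ (-τ) * Real.exp (-‖v‖ ^ 2)
          ≤ 1 * Real.exp (-‖v‖ ^ 2) := mul_le_mul_of_nonneg_right this (Real.exp_nonneg _)
        _ = Real.exp (-‖v‖ ^ 2) := one_mul _
  refine integral_mono_of_nonneg (Filter.Eventually.of_forall fun v => by positivity)
    hint (Filter.Eventually.of_forall fun v => ?_)
  show _ ≤ (1 + ‖Real.sqrt t • v‖ ^ 2) ^ (-τ) * Real.exp (-(t⁻¹ * ‖Real.sqrt t • v‖ ^ 2))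
  rw [norm_sqrt_smul h0.le, ← mul_assoc, inv_mul_cancel₀ h0.ne', one_mul]
  have hb : (1 + ‖v‖ ^ 2) ^ (-τ) ≤ (1 + t * ‖v‖ ^ 2) ^ (-τ) :=
    Real.rpow_le_rpow_of_nonpos (by positivity) (by nlinarith [sq_nonneg ‖v‖]) (neg_nonpos.2 hτ)
  exact mul_le_mul_of_nonneg_right hb (Real.exp_nonneg _)

lemma coherent_fourier_norm_sq {ℏ : ℝ} (hℏ : 0 < ℏ) (q p ξ : E3) :
    ‖∫ x : E3, coherent ℏ q p x * Complex.exp (-(Complex.I * ((inner ℝ x ξ : ℝ) : ℂ)))‖ ^ 2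
      = (Real.pi * ℏ) ^ (-(3 : ℝ) / 2) * (2 * Real.pi * ℏ) ^ (3 : ℕ) *
        Real.exp (-(‖p - ℏ • ξ‖ ^ 2 / ℏ)) := by
  have hℏC : (ℏ : ℂ) ≠ 0 := Complex.ofReal_ne_zero.2 hℏ.ne'
  set A : ℝ := (Real.pi * ℏ) ^ (-(3 : ℝ) / 4) with hA
  set b : ℂ := (((2 * ℏ)⁻¹ : ℝ) : ℂ) with hbdef
  set w : E3 := ℏ⁻¹ • p - ξ with hw
  have hb : 0 < b.re := by rw [hbdef]; simp; positivity
  set F : E3 → ℂ := fun x => -((‖x - q‖ ^ 2 / (2 * ℏ) : ℝ) : ℂ)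
      + Complex.I * ((inner ℝ (x - q) p : ℝ) : ℂ) / (ℏ : ℂ)
      + -(Complex.I * ((inner ℝ x ξ : ℝ) : ℂ)) with hF
  have h1 : ∀ x : E3, coherent ℏ q p x * Complex.exp (-(Complex.I * ((inner ℝ x ξ : ℝ) : ℂ)))
      = (A : ℂ) * Complex.exp (F x) := by
    intro x
    rw [hF, coherent, Complex.exp_add, Complex.exp_add]
    ring
  have h2 : (∫ x : E3, coherent ℏ q p x * Complex.exp (-(Complex.I * ((inner ℝ x ξ : ℝ) : ℂ))))
      = (A : ℂ) * ∫ x : E3, Complex.exp (F x) := by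
    simp only [h1]; exact integral_const_mul _ _
  have h3 : ∀ y : E3, F (y + q) = (-b * (‖y‖ : ℂ) ^ 2 + Complex.I * ((inner ℝ w y : ℝ) : ℂ))
      + -(Complex.I * ((inner ℝ q ξ : ℝ) : ℂ)) := by
    intro y
    have e1 : y + q - q = y := add_sub_cancel_right y q
    have e2 : (inner ℝ w y : ℝ) = ℏ⁻¹ * (inner ℝ y p : ℝ) - (inner ℝ y ξ : ℝ) := by
      rw [hw, inner_sub_left, real_inner_smul_left, real_inner_comm p y, real_inner_comm ξ y]
    have e3 : (inner ℝ (y + q) ξ : ℝ) = (inner ℝ y ξ : ℝ) + (inner ℝ q ξ : ℝ) :=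
      inner_add_left _ _ _
    rw [hF]
    simp only [e1, e3, e2, hbdef]
    push_cast
    field_simp
    ring
  have h4 : (∫ x : E3, Complex.exp (F x)) = (∫ y : E3, Complex.exp (F (y + q))) :=
    (integral_add_right_eq_self (fun x : E3 => Complex.exp (F x)) q).symm
  have h5 : (∫ y : E3, Complex.exp (F (y + q)))
      = (∫ y : E3, Complex.exp (-b * (‖y‖ : ℂ) ^ 2 + Complex.I * ((inner ℝ w y : ℝ) : ℂ)))
          * Complex.exp (-(Complex.I * ((inner ℝ q ξ : ℝ) : ℂ))) := by
    simp only [h3, Complex.exp_add]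
    exact integral_mul_const _ _
  have h6 := GaussianFourier.integral_cexp_neg_mul_sq_norm_add (V := E3) hb Complex.I w
  rw [h2, h4, h5, h6]
  have hπb : ((Real.pi : ℂ) / b) = ((2 * Real.pi * ℏ : ℝ) : ℂ) := by
    rw [hbdef]; push_cast; field_simp
  have hfr : ((Module.finrank ℝ E3 : ℂ) / 2) = (((3 : ℝ) / 2 : ℝ) : ℂ) := by
    rw [finrank_E3]; norm_num
  have hexp : Complex.I ^ 2 * (‖w‖ : ℂ) ^ 2 / (4 * b) = ((-(ℏ * ‖w‖ ^ 2 / 2) : ℝ) : ℂ) := by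
    rw [Complex.I_sq, hbdef]; push_cast; field_simp; ring
  rw [hπb, hfr, hexp,
    ← Complex.ofReal_cpow (show (0:ℝ) ≤ 2 * Real.pi * ℏ by positivity) ((3:ℝ)/2)]
  simp only [norm_mul, Complex.norm_real, Real.norm_eq_abs, Complex.norm_exp,
    Complex.ofReal_re, Complex.neg_re, Complex.mul_re, Complex.I_re, Complex.I_im,
    Complex.ofReal_im, mul_zero, zero_mul, sub_zero, zero_sub, neg_zero, neg_neg]
  rw [abs_of_nonneg (by positivity : (0:ℝ) ≤ A),
    abs_of_nonneg (by positivity : (0:ℝ) ≤ (2 * Real.pi * ℏ) ^ ((3:ℝ)/2))]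
  rw [Real.exp_zero, mul_one]
  have hAsq : A ^ 2 = (Real.pi * ℏ) ^ (-(3 : ℝ) / 2) := by
    rw [hA, ← Real.rpow_natCast ((Real.pi * ℏ) ^ (-(3:ℝ)/4)) 2, ← Real.rpow_mul (by positivity)]
    norm_num
  have hBsq : ((2 * Real.pi * ℏ) ^ ((3:ℝ)/2)) ^ 2 = (2 * Real.pi * ℏ) ^ (3 : ℕ) := by
    rw [← Real.rpow_natCast ((2 * Real.pi * ℏ) ^ ((3:ℝ)/2)) 2, ← Real.rpow_mul (by positivity),
      ← Real.rpow_natCast (2 * Real.pi * ℏ) 3]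
    norm_num
  have hwsq : ℏ * ‖w‖ ^ 2 = ‖p - ℏ • ξ‖ ^ 2 / ℏ := by
    have hpw : p - ℏ • ξ = ℏ • w := by
      rw [hw, smul_sub, smul_smul, mul_inv_cancel₀ hℏ.ne', one_smul]
    rw [hpw, norm_smul, Real.norm_eq_abs, abs_of_pos hℏ, mul_pow]
    field_simp
  rw [mul_pow, mul_pow, hAsq, hBsq, pow_two (Real.exp _), ← Real.exp_add,
    show (-(ℏ * ‖w‖ ^ 2 / 2) + -(ℏ * ‖w‖ ^ 2 / 2)) = -(ℏ * ‖w‖ ^ 2) by ring, hwsq]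
  ring

lemma J_pos {τ' : ℝ} (h : Integrable (fun v : E3 => (1 + ‖v‖ ^ 2) ^ τ' * Real.exp (-‖v‖ ^ 2))) :
    0 < ∫ v : E3, (1 + ‖v‖ ^ 2) ^ τ' * Real.exp (-‖v‖ ^ 2) := by
  rw [integral_pos_iff_support_of_nonneg (fun v => by positivity) h]
  have hs : Function.support (fun v : E3 => (1 + ‖v‖ ^ 2) ^ τ' * Real.exp (-‖v‖ ^ 2))
      = Set.univ := Set.eq_univ_iff_forall.mpr fun v => by
        simp only [Function.mem_support]
        positivity
  rw [hs]
  exact isOpen_univ.measure_pos volume Set.univ_nonempty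

/-- for `σ ∈ ℝ`, the `L²`-norm squared of `⟨ℏ∇⟩^σ φ^ℏ_{(q,p)}` (expressed via
Plancherel through the Fourier transform of the coherent state) equals
`(πℏ)^{-3/2} ‖⟨ξ⟩^σ e^{-|p-ξ|²/(2ℏ)}‖_{L²_ξ}²` and is comparable to `⟨p⟩^{2σ}` uniformly in
`ℏ ∈ (0,1]` and `q`, with constants depending only on `σ`. -/
theorem weighted_coherent_state_norm (σ : ℝ) :
    ∃ c > (0 : ℝ), ∃ C > (0 : ℝ), ∀ ℏ : ℝ, 0 < ℏ → ℏ ≤ 1 → ∀ q p : E3,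
      ((((2 * Real.pi) ^ 3 : ℝ))⁻¹ *
          ∫ ξ : E3, ((1 + ℏ ^ 2 * ‖ξ‖ ^ 2) ^ σ : ℝ) *
            ‖∫ x : E3, coherent ℏ q p x * Complex.exp (-(Complex.I * ((inner ℝ x ξ : ℝ) : ℂ)))‖ ^ 2
        = (Real.pi * ℏ) ^ (-(3 : ℝ) / 2) *
            ∫ ξ : E3, ((1 + ‖ξ‖ ^ 2) ^ σ : ℝ) * Real.exp (-‖p - ξ‖ ^ 2 / ℏ)) ∧
      c * (1 + ‖p‖ ^ 2) ^ σ ≤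
        (Real.pi * ℏ) ^ (-(3 : ℝ) / 2) *
          ∫ ξ : E3, ((1 + ‖ξ‖ ^ 2) ^ σ : ℝ) * Real.exp (-‖p - ξ‖ ^ 2 / ℏ) ∧
      (Real.pi * ℏ) ^ (-(3 : ℝ) / 2) *
          ∫ ξ : E3, ((1 + ‖ξ‖ ^ 2) ^ σ : ℝ) * Real.exp (-‖p - ξ‖ ^ 2 / ℏ) ≤
        C * (1 + ‖p‖ ^ 2) ^ σ := by
  have hτ : 0 ≤ |σ| := abs_nonneg σ
  set τ := |σ| with hτdef
  set Jp : ℝ := ∫ v : E3, (1 + ‖v‖ ^ 2) ^ τ * Real.exp (-‖v‖ ^ 2) with hJp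
  set Jm : ℝ := ∫ v : E3, (1 + ‖v‖ ^ 2) ^ (-τ) * Real.exp (-‖v‖ ^ 2) with hJm
  have hJp_pos : 0 < Jp := J_pos (integrable_pg1 hτ)
  have hJm_pos : 0 < Jm := J_pos (integrable_pgm hτ)
  have hπ : (0:ℝ) < Real.pi ^ (-(3:ℝ)/2) := Real.rpow_pos_of_pos Real.pi_pos _
  refine ⟨Real.pi ^ (-(3:ℝ)/2) * (2 ^ (-τ) * Jm),
    mul_pos hπ (mul_pos (Real.rpow_pos_of_pos two_pos _) hJm_pos),
    Real.pi ^ (-(3:ℝ)/2) * (2 ^ τ * Jp),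
    mul_pos hπ (mul_pos (Real.rpow_pos_of_pos two_pos _) hJp_pos), ?_⟩
  intro ℏ hℏ hℏ1 q p
  set g : E3 → ℝ := fun η => ((1 + ‖η‖ ^ 2) ^ σ : ℝ) * Real.exp (-‖p - η‖ ^ 2 / ℏ) with hg
  have hπℏ : (0:ℝ) < (Real.pi * ℏ) ^ (-(3:ℝ)/2) := Real.rpow_pos_of_pos (by positivity) _
  have hkey : (Real.pi * ℏ) ^ (-(3:ℝ)/2) * ℏ ^ ((3:ℝ)/2) = Real.pi ^ (-(3:ℝ)/2) := by
    rw [Real.mul_rpow Real.pi_pos.le hℏ.le, mul_assoc, ← Real.rpow_add hℏ]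
    norm_num
  -- the upper pointwise bound
  have hup : ∀ ξ : E3, g ξ ≤ ((1 + ‖p‖ ^ 2) ^ σ * 2 ^ τ) *
      ((1 + ‖ξ - p‖ ^ 2) ^ τ * Real.exp (-(ℏ⁻¹ * ‖ξ - p‖ ^ 2))) := by
    intro ξ
    have h1 : g ξ ≤ ((1 + ‖p‖ ^ 2) ^ σ * (2 * (1 + ‖p - ξ‖ ^ 2)) ^ τ) *
        Real.exp (-‖p - ξ‖ ^ 2 / ℏ) :=
      mul_le_mul_of_nonneg_right (peetre_up σ p ξ) (Real.exp_nonneg _)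
    refine h1.trans_eq ?_
    rw [Real.mul_rpow (by norm_num) (by positivity), norm_sub_rev ξ p,
      show -‖p - ξ‖ ^ 2 / ℏ = -(ℏ⁻¹ * ‖p - ξ‖ ^ 2) from by ring]
    ring
  -- the lower pointwise bound
  have hdown : ∀ ξ : E3, ((1 + ‖p‖ ^ 2) ^ σ * 2 ^ (-τ)) *
      ((1 + ‖ξ - p‖ ^ 2) ^ (-τ) * Real.exp (-(ℏ⁻¹ * ‖ξ - p‖ ^ 2))) ≤ g ξ := by
    intro ξ
    have h1 : ((1 + ‖p‖ ^ 2) ^ σ * (2 * (1 + ‖p - ξ‖ ^ 2)) ^ (-τ)) *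
        Real.exp (-‖p - ξ‖ ^ 2 / ℏ) ≤ g ξ :=
      mul_le_mul_of_nonneg_right (peetre_down σ p ξ) (Real.exp_nonneg _)
    refine Eq.trans_le ?_ h1
    rw [Real.mul_rpow (by norm_num) (by positivity), norm_sub_rev ξ p,
      show -‖p - ξ‖ ^ 2 / ℏ = -(ℏ⁻¹ * ‖p - ξ‖ ^ 2) from by ring]
    ring
  -- integrability of g
  have hgnn : ∀ ξ : E3, 0 ≤ g ξ := by
    intro ξ
    simp only [hg]
    positivity
  have hgm : AEStronglyMeasurable g volume := by
    apply Continuous.aestronglyMeasurable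
    rw [hg]
    apply Continuous.mul
    · exact (continuous_const.add (continuous_norm.pow 2)).rpow_const
        fun v => Or.inl (add_pos_of_pos_of_nonneg one_pos (sq_nonneg _)).ne'
    · exact Real.continuous_exp.comp (by fun_prop)
  have hmaj : Integrable (fun ξ : E3 => ((1 + ‖p‖ ^ 2) ^ σ * 2 ^ τ) *
      ((1 + ‖ξ - p‖ ^ 2) ^ τ * Real.exp (-(ℏ⁻¹ * ‖ξ - p‖ ^ 2)))) :=
    ((integrable_pg hτ (inv_pos.2 hℏ)).comp_sub_right p).const_mul _
  have hgint : Integrable g := by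
    apply Integrable.mono' hmaj hgm
    filter_upwards with ξ
    rw [Real.norm_of_nonneg (hgnn ξ)]
    exact hup ξ
  -- the equality
  have hI1 : (∫ ξ : E3, ((1 + ℏ ^ 2 * ‖ξ‖ ^ 2) ^ σ : ℝ) *
        ‖∫ x : E3, coherent ℏ q p x * Complex.exp (-(Complex.I * ((inner ℝ x ξ : ℝ) : ℂ)))‖ ^ 2)
      = ((Real.pi * ℏ) ^ (-(3 : ℝ) / 2) * (2 * Real.pi * ℏ) ^ (3 : ℕ)) *
          ∫ ξ : E3, g (ℏ • ξ) := by
    rw [← integral_const_mul]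
    refine integral_congr_ae (Filter.Eventually.of_forall fun ξ => ?_)
    simp only [hg]
    simp only [coherent_fourier_norm_sq hℏ q p]
    have hξn : ‖ℏ • ξ‖ ^ 2 = ℏ ^ 2 * ‖ξ‖ ^ 2 := by
      rw [norm_smul, Real.norm_eq_abs, mul_pow, sq_abs]
    rw [hξn, show -‖p - ℏ • ξ‖ ^ 2 / ℏ = -(‖p - ℏ • ξ‖ ^ 2 / ℏ) from by ring]
    ring
  have hI2 : (∫ ξ : E3, g (ℏ • ξ)) = (ℏ ^ 3)⁻¹ * ∫ η : E3, g η := scaled_int g hℏ.le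
  refine ⟨?_, ?_, ?_⟩
  · rw [hI1, hI2]
    rw [show ((2 * Real.pi * ℏ) ^ (3 : ℕ) : ℝ) = (2 * Real.pi) ^ 3 * ℏ ^ 3 from by ring]
    have h2π : ((2 * Real.pi) ^ 3 : ℝ) ≠ 0 := by positivity
    have hℏ3 : (ℏ ^ 3 : ℝ) ≠ 0 := by positivity
    field_simp
  · -- lower bound
    have hc0 : (0:ℝ) ≤ (1 + ‖p‖ ^ 2) ^ σ * 2 ^ (-τ) := by positivity
    have hchain : ((1 + ‖p‖ ^ 2) ^ σ * 2 ^ (-τ)) * (ℏ ^ ((3:ℝ)/2) * Jm) ≤ ∫ η : E3, g η := by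
      have s1 : ((1 + ‖p‖ ^ 2) ^ σ * 2 ^ (-τ)) * (ℏ ^ ((3:ℝ)/2) * Jm)
          ≤ ((1 + ‖p‖ ^ 2) ^ σ * 2 ^ (-τ)) *
            ∫ u : E3, (1 + ‖u‖ ^ 2) ^ (-τ) * Real.exp (-(ℏ⁻¹ * ‖u‖ ^ 2)) :=
        mul_le_mul_of_nonneg_left (K_down hτ hℏ hℏ1) hc0
      have s2 : (∫ u : E3, (1 + ‖u‖ ^ 2) ^ (-τ) * Real.exp (-(ℏ⁻¹ * ‖u‖ ^ 2)))
          = ∫ ξ : E3, (1 + ‖ξ - p‖ ^ 2) ^ (-τ) * Real.exp (-(ℏ⁻¹ * ‖ξ - p‖ ^ 2)) :=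
        (integral_sub_right_eq_self
          (fun u : E3 => (1 + ‖u‖ ^ 2) ^ (-τ) * Real.exp (-(ℏ⁻¹ * ‖u‖ ^ 2))) p).symm
      have s3 : ((1 + ‖p‖ ^ 2) ^ σ * 2 ^ (-τ)) *
            (∫ ξ : E3, (1 + ‖ξ - p‖ ^ 2) ^ (-τ) * Real.exp (-(ℏ⁻¹ * ‖ξ - p‖ ^ 2)))
          = ∫ ξ : E3, ((1 + ‖p‖ ^ 2) ^ σ * 2 ^ (-τ)) *
            ((1 + ‖ξ - p‖ ^ 2) ^ (-τ) * Real.exp (-(ℏ⁻¹ * ‖ξ - p‖ ^ 2))) :=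
        (integral_const_mul _ _).symm
      have s4 : (∫ ξ : E3, ((1 + ‖p‖ ^ 2) ^ σ * 2 ^ (-τ)) *
            ((1 + ‖ξ - p‖ ^ 2) ^ (-τ) * Real.exp (-(ℏ⁻¹ * ‖ξ - p‖ ^ 2)))) ≤ ∫ η : E3, g η :=
        integral_mono_of_nonneg (Filter.Eventually.of_forall fun ξ => by positivity)
          hgint (Filter.Eventually.of_forall hdown)
      calc ((1 + ‖p‖ ^ 2) ^ σ * 2 ^ (-τ)) * (ℏ ^ ((3:ℝ)/2) * Jm)
          ≤ _ := s1
        _ = _ := by rw [s2, s3]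
        _ ≤ ∫ η : E3, g η := s4
    calc (Real.pi ^ (-(3:ℝ)/2) * (2 ^ (-τ) * Jm)) * (1 + ‖p‖ ^ 2) ^ σ
        = (Real.pi * ℏ) ^ (-(3:ℝ)/2) *
            (((1 + ‖p‖ ^ 2) ^ σ * 2 ^ (-τ)) * (ℏ ^ ((3:ℝ)/2) * Jm)) := by
          rw [← hkey]; ring
      _ ≤ (Real.pi * ℏ) ^ (-(3:ℝ)/2) * ∫ η : E3, g η :=
          mul_le_mul_of_nonneg_left hchain hπℏ.le
  · -- upper bound
    have hc0 : (0:ℝ) ≤ (1 + ‖p‖ ^ 2) ^ σ * 2 ^ τ := by positivity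
    have hchain : (∫ η : E3, g η) ≤ ((1 + ‖p‖ ^ 2) ^ σ * 2 ^ τ) * (ℏ ^ ((3:ℝ)/2) * Jp) := by
      have s4 : (∫ η : E3, g η) ≤ ∫ ξ : E3, ((1 + ‖p‖ ^ 2) ^ σ * 2 ^ τ) *
            ((1 + ‖ξ - p‖ ^ 2) ^ τ * Real.exp (-(ℏ⁻¹ * ‖ξ - p‖ ^ 2))) :=
        integral_mono_of_nonneg (Filter.Eventually.of_forall hgnn) hmaj
          (Filter.Eventually.of_forall hup)
      have s3 : (∫ ξ : E3, ((1 + ‖p‖ ^ 2) ^ σ * 2 ^ τ) *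
            ((1 + ‖ξ - p‖ ^ 2) ^ τ * Real.exp (-(ℏ⁻¹ * ‖ξ - p‖ ^ 2))))
          = ((1 + ‖p‖ ^ 2) ^ σ * 2 ^ τ) *
            ∫ ξ : E3, (1 + ‖ξ - p‖ ^ 2) ^ τ * Real.exp (-(ℏ⁻¹ * ‖ξ - p‖ ^ 2)) :=
        integral_const_mul _ _
      have s2 : (∫ ξ : E3, (1 + ‖ξ - p‖ ^ 2) ^ τ * Real.exp (-(ℏ⁻¹ * ‖ξ - p‖ ^ 2)))
          = ∫ u : E3, (1 + ‖u‖ ^ 2) ^ τ * Real.exp (-(ℏ⁻¹ * ‖u‖ ^ 2)) :=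
        integral_sub_right_eq_self
          (fun u : E3 => (1 + ‖u‖ ^ 2) ^ τ * Real.exp (-(ℏ⁻¹ * ‖u‖ ^ 2))) p
      have s1 : (∫ u : E3, (1 + ‖u‖ ^ 2) ^ τ * Real.exp (-(ℏ⁻¹ * ‖u‖ ^ 2)))
          ≤ ℏ ^ ((3:ℝ)/2) * Jp := K_up hτ hℏ hℏ1
      calc (∫ η : E3, g η) ≤ _ := s4
        _ = _ := by rw [s3, s2]
        _ ≤ ((1 + ‖p‖ ^ 2) ^ σ * 2 ^ τ) * (ℏ ^ ((3:ℝ)/2) * Jp) :=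
            mul_le_mul_of_nonneg_left s1 hc0
    calc (Real.pi * ℏ) ^ (-(3:ℝ)/2) * ∫ η : E3, g η
        ≤ (Real.pi * ℏ) ^ (-(3:ℝ)/2) *
            (((1 + ‖p‖ ^ 2) ^ σ * 2 ^ τ) * (ℏ ^ ((3:ℝ)/2) * Jp)) :=
          mul_le_mul_of_nonneg_left hchain hπℏ.le
      _ = (Real.pi ^ (-(3:ℝ)/2) * (2 ^ τ * Jp)) * (1 + ‖p‖ ^ 2) ^ σ := by
          rw [← hkey]; ring
end
end

section
/- Let t ≠ 0 and f₀ : ℝ³×ℝ³ → [0,∞). Then the spatial density of the free transport evolution ρ(t,q) := ∫_{ℝ³} f₀(q - tp, p) dp satisfies the dispersion estimate ‖ρ(t,·)‖_{L^∞(ℝ³)} ≤ min( |t|^{-3} ‖f₀‖_{L¹_q L^∞_p}, ‖f₀‖_{L¹_p L^∞_q} ), where ‖f₀‖_{L¹_q L^∞_p} = ∫_{ℝ³} sup_p f₀(q,p) dq and ‖f₀‖_{L¹_p L^∞_q} = ∫_{ℝ³} sup_q f₀(q,p) dp. -/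
open MeasureTheory
open scoped ENNReal
noncomputable section

lemma change_var (t : ℝ) (ht : t ≠ 0) (q : E3) (g : E3 → ℝ≥0∞) :
    (∫⁻ p : E3, g (q - t • p)) =
      ENNReal.ofReal (|t| ^ (-(3 : ℝ))) * ∫⁻ y : E3, g y := by
  let e : E3 ≃ᵐ E3 :=
    ((Homeomorph.smulOfNeZero t ht).trans
      ((Homeomorph.neg E3).trans (Homeomorph.addLeft q))).toMeasurableEquiv
  have he : ∀ p : E3, e p = q - t • p := by
    intro p
    show q + -(t • p) = q - t • p
    rw [sub_eq_add_neg]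
  have hmap : Measure.map e (volume : Measure E3) =
      ENNReal.ofReal (|t| ^ (-(3 : ℝ))) • volume := by
    have h1 : (e : E3 → E3) = (fun x => q + x) ∘ (fun x => -x) ∘ (fun x => t • x) := by
      funext p; rw [he p]; simp [sub_eq_add_neg]
    have hsm : Measurable fun x : E3 => t • x := measurable_const_smul t
    have hng : Measurable fun x : E3 => -x := measurable_neg
    have had : Measurable fun x : E3 => q + x := measurable_const_add q
    rw [h1, ← Measure.map_map had (hng.comp hsm), ← Measure.map_map hng hsm,
      Measure.map_addHaar_smul (volume : Measure E3) ht, Measure.map_smul, Measure.map_smul,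
      Measure.map_neg_eq_self, map_add_left_eq_self]
    congr 1
    rw [finrank_euclideanSpace_fin, abs_inv]
    rw [Real.rpow_neg (abs_nonneg t)]
    rw [show ((3:ℝ)) = ((3:ℕ):ℝ) by norm_num, Real.rpow_natCast, ← abs_pow]
  calc (∫⁻ p : E3, g (q - t • p)) = ∫⁻ p : E3, g (e p) := by
        simp only [he]
    _ = ∫⁻ y : E3, g y ∂(Measure.map e volume) := (lintegral_map_equiv g e).symm
    _ = ENNReal.ofReal (|t| ^ (-(3 : ℝ))) * ∫⁻ y : E3, g y := by
        rw [hmap, lintegral_smul_measure, smul_eq_mul]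

/-- Castella–Perthame dispersion estimate: for `t ≠ 0` and
`f₀ : ℝ³×ℝ³ → [0,∞)`, the density `ρ(t,q) = ∫ f₀(q-tp,p) dp` of the free transport flow
satisfies `‖ρ(t)‖_{L^∞} ≤ min(|t|^{-3}‖f₀‖_{L¹_q L^∞_p}, ‖f₀‖_{L¹_p L^∞_q})`
(the minimum being stated as both bounds). -/
theorem transport_dispersion (t : ℝ) (ht : t ≠ 0) (f₀ : E3 → E3 → ℝ≥0∞)
    (hm : Measurable (Function.uncurry f₀)) :
    ∀ q : E3,
      ((∫⁻ p : E3, f₀ (q - t • p) p) ≤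
          ENNReal.ofReal (|t| ^ (-(3 : ℝ))) * ∫⁻ q' : E3, ⨆ p : E3, f₀ q' p) ∧
      ((∫⁻ p : E3, f₀ (q - t • p) p) ≤ ∫⁻ p : E3, ⨆ q' : E3, f₀ q' p) := by
  intro q
  constructor
  · calc (∫⁻ p : E3, f₀ (q - t • p) p)
        ≤ ∫⁻ p : E3, ⨆ p' : E3, f₀ (q - t • p) p' :=
          lintegral_mono fun p => le_iSup (f₀ (q - t • p)) p
    _ = ENNReal.ofReal (|t| ^ (-(3 : ℝ))) * ∫⁻ q' : E3, ⨆ p : E3, f₀ q' p :=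
          change_var t ht q (fun y => ⨆ p' : E3, f₀ y p')
  · exact lintegral_mono fun p => le_iSup (fun q' => f₀ q' p) (q - t • p)
end
end
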